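/- arXiv:2509.18752 — 2 statements merged into one kernel-verified Lean document; each statement's English description precedes it below -/
import Mathlib

section
/- Lower bound in the SDP characterization of the vector atomic norm: Let x ∈ ℂ^N, u ∈ ℂ^N, and t ∈ ℝ be such that the block matrix [[Toep(u), x], [x^H, t]] ∈ ℂ^{(N+1)×(N+1)} is positive semidefinite. Then ‖x‖_{𝒜_f} ≤ (1/(2N)) trace(Toep(u)) + t/2, where ‖·‖_{𝒜_f} denotes the atomic norm over complex sinusoids. -/
open Real Matrix ComplexOrder
open scoped InnerProductSpace

/-- The far-field steering vector (atom) `d(φ) ∈ ℂ^N`, `[d(φ)]ₙ = exp(j2π(n−1)φ)`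
(zero-based index). -/
noncomputable def dvec (N : ℕ) (φ : ℝ) : Fin N → ℂ :=
  fun n => Complex.exp (Complex.I * (2 * Real.pi * (n : ℝ) * φ))

/-- `Toep u` is the `N × N` Hermitian Toeplitz matrix whose first column is `u`. -/
noncomputable def Toep (N : ℕ) (u : Fin N → ℂ) : Matrix (Fin N) (Fin N) ℂ :=
  Matrix.of fun m n =>
    if _h : (n : ℕ) ≤ (m : ℕ) then
      u ⟨(m : ℕ) - (n : ℕ), Nat.lt_of_le_of_lt (Nat.sub_le _ _) m.2⟩
    else
      star (u ⟨(n : ℕ) - (m : ℕ), Nat.lt_of_le_of_lt (Nat.sub_le _ _) n.2⟩)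

/-- The `(N+1) × (N+1)` block matrix `[[Toep(u), x], [xᴴ, t]]`. -/
noncomputable def blockV (N : ℕ) (u x : Fin N → ℂ) (t : ℝ) :
    Matrix (Fin N ⊕ Unit) (Fin N ⊕ Unit) ℂ :=
  Matrix.fromBlocks (Toep N u) (Matrix.of fun i _ => x i)
    (Matrix.of fun _ j => star (x j)) (Matrix.of fun _ _ => (t : ℂ))

/-- The atomic norm `‖x‖_{𝒜_f}` over the atoms `𝒜_f = {d(φ) : φ ∈ [0,1)}`:
the infimum of `Σᵢ |αᵢ|` over finite representations `x = Σᵢ αᵢ d(φᵢ)`. -/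
noncomputable def atomicNormF (N : ℕ) (x : Fin N → ℂ) : ℝ :=
  sInf { s : ℝ | ∃ (K : ℕ) (α : Fin K → ℂ) (φ : Fin K → ℝ),
    (∀ i, φ i ∈ Set.Ico (0 : ℝ) 1) ∧ x = ∑ i, α i • dvec N (φ i) ∧
    s = ∑ i, ‖α i‖ }

/-- The value of the SDP
`inf { (1/(2N)) tr(Toep(u)) + t/2 : [[Toep(u), x], [xᴴ, t]] ⪰ 0 }`. -/
noncomputable def sdpValF (N : ℕ) (x : Fin N → ℂ) : ℝ :=
  sInf { v : ℝ | ∃ (u : Fin N → ℂ) (t : ℝ), (blockV N u x t).PosSemidef ∧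
    v = (Matrix.trace (Toep N u)).re / (2 * N) + t / 2 }

namespace SdpAux

noncomputable def mu (φ : ℝ) : ℂ := Complex.exp (Complex.I * (2 * Real.pi * φ))

lemma dvec_apply (N : ℕ) (φ : ℝ) (n : Fin N) : dvec N φ n = mu φ ^ (n : ℕ) := by
  rw [dvec, mu, ← Complex.exp_nat_mul]
  congr 1
  push_cast
  ring

lemma abs_mu (φ : ℝ) : ‖mu φ‖ = 1 := by
  rw [mu, Complex.norm_exp]
  have : (Complex.I * (2 * ↑Real.pi * ↑φ)).re = 0 := by
    simp [Complex.mul_re]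
  rw [this, Real.exp_zero]

lemma exists_theta (lam : ℂ) (h : ‖lam‖ = 1) :
    ∃ θ : ℝ, θ ∈ Set.Ico (0:ℝ) 1 ∧ mu θ = lam := by
  have hpi := Real.pi_pos
  have hlam : Complex.exp (↑(Complex.arg lam) * Complex.I) = lam := by
    have h2 := Complex.norm_mul_exp_arg_mul_I lam
    rwa [h, Complex.ofReal_one, one_mul] at h2
  rcases le_or_gt 0 (Complex.arg lam) with ha | ha
  · refine ⟨Complex.arg lam / (2 * Real.pi), ⟨by positivity, ?_⟩, ?_⟩
    · rw [div_lt_one (by positivity)]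
      have := Complex.arg_le_pi lam
      nlinarith
    · rw [mu, show Complex.I * (2 * (Real.pi:ℂ) * ((Complex.arg lam / (2 * Real.pi) : ℝ) : ℂ))
          = (Complex.arg lam : ℂ) * Complex.I by
        push_cast
        have hπ : (Real.pi : ℂ) ≠ 0 := by exact_mod_cast Real.pi_ne_zero
        field_simp]
      exact hlam
  · refine ⟨Complex.arg lam / (2 * Real.pi) + 1, ⟨?_, ?_⟩, ?_⟩
    · have h2 := Complex.neg_pi_lt_arg lam
      have h3 : (-1 : ℝ) < Complex.arg lam / (2 * Real.pi) := by
        rw [lt_div_iff₀ (by positivity)]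
        nlinarith
      linarith
    · have h3 : Complex.arg lam / (2 * Real.pi) < 0 :=
        div_neg_of_neg_of_pos ha (by positivity)
      linarith
    · rw [mu]
      have key : Complex.I * (2 * (Real.pi:ℂ) * ((Complex.arg lam / (2 * Real.pi) + 1 : ℝ) : ℂ))
          = (Complex.arg lam : ℂ) * Complex.I + 2 * Real.pi * Complex.I := by
        push_cast
        have : (Real.pi : ℂ) ≠ 0 := by exact_mod_cast Real.pi_ne_zero
        field_simp
      rw [key, Complex.exp_add, Complex.exp_two_pi_mul_I, mul_one]
      exact hlam

lemma toep_shift (N : ℕ) (u : Fin N → ℂ) (i j : ℕ) (hi : i + 1 < N) (hj : j + 1 < N) :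
    Toep N u ⟨i+1, hi⟩ ⟨j+1, hj⟩ = Toep N u ⟨i, by omega⟩ ⟨j, by omega⟩ := by
  simp only [Toep, Matrix.of_apply]
  rcases le_or_gt j i with h | h
  · rw [dif_pos (by simpa using Nat.succ_le_succ h), dif_pos (by simpa using h)]
    congr 1
    exact Fin.ext (by simp)
  · rw [dif_neg (by omega), dif_neg (by omega)]
    congr 2
    exact Fin.ext (by simp [Nat.succ_sub_succ])


section Isometry

variable {N : ℕ}

local notation "V" => EuclideanSpace ℂ (Fin N)

lemma exists_shift_isometry (f : Fin N → EuclideanSpace ℂ (Fin N))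
    (hshift : ∀ (i j : ℕ) (hi : i + 1 < N) (hj : j + 1 < N),
      ⟪f ⟨i+1, hi⟩, f ⟨j+1, hj⟩⟫_ℂ = ⟪f ⟨i, by omega⟩, f ⟨j, by omega⟩⟫_ℂ) :
    ∃ W : EuclideanSpace ℂ (Fin N) ≃ₗᵢ[ℂ] EuclideanSpace ℂ (Fin N),
      ∀ (i : ℕ) (hi : i + 1 < N), W (f ⟨i, by omega⟩) = f ⟨i+1, hi⟩ := by
  classical
  set m := N - 1 with hm
  have hmN : ∀ i : Fin m, (i : ℕ) < N := fun i => by have := i.2; omega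
  have hmN' : ∀ i : Fin m, (i : ℕ) + 1 < N := fun i => by have := i.2; omega
  let G : EuclideanSpace ℂ (Fin m) →ₗ[ℂ] V :=
    { toFun := fun a => ∑ i : Fin m, a i • f ⟨i, hmN i⟩
      map_add' := by
        intro a b
        simp [add_smul, Finset.sum_add_distrib]
      map_smul' := by
        intro c a
        simp [smul_smul, Finset.smul_sum] }
  let H : EuclideanSpace ℂ (Fin m) →ₗ[ℂ] V :=
    { toFun := fun a => ∑ i : Fin m, a i • f ⟨(i : ℕ) + 1, hmN' i⟩
      map_add' := by
        intro a b
        simp [add_smul, Finset.sum_add_distrib]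
      map_smul' := by
        intro c a
        simp [smul_smul, Finset.smul_sum] }
  have hinner : ∀ a b, ⟪G a, G b⟫_ℂ = ⟪H a, H b⟫_ℂ := by
    intro a b
    simp only [G, H, LinearMap.coe_mk, AddHom.coe_mk, sum_inner, inner_sum, inner_smul_left,
      inner_smul_right]
    refine Finset.sum_congr rfl fun i _ => ?_
    congr 1
    refine Finset.sum_congr rfl fun j _ => ?_
    congr 1
    exact (hshift j i (hmN' j) (hmN' i)).symm
  have hnorm : ∀ a, ‖G a‖ = ‖H a‖ := by
    intro a
    rw [@norm_eq_sqrt_re_inner ℂ, @norm_eq_sqrt_re_inner ℂ, hinner a a]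
  have hker : LinearMap.ker G ≤ LinearMap.ker H := by
    intro a ha
    rw [LinearMap.mem_ker] at ha ⊢
    rw [← norm_eq_zero, ← hnorm, ha, norm_zero]
  let e := G.quotKerEquivRange
  let L0 : (LinearMap.range G) →ₗ[ℂ] V :=
    ((LinearMap.ker G).liftQ H hker) ∘ₗ (e.symm.toLinearMap)
  have hL0 : ∀ a, L0 ⟨G a, LinearMap.mem_range_self G a⟩ = H a := by
    intro a
    have h1 : e.symm ⟨G a, LinearMap.mem_range_self G a⟩ = Submodule.Quotient.mk a :=
      G.quotKerEquivRange_symm_apply_image a (LinearMap.mem_range_self G a)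
    simp only [L0, LinearMap.coe_comp, Function.comp_apply, LinearEquiv.coe_coe, h1,
      Submodule.liftQ_apply]
  have hL0norm : ∀ v : LinearMap.range G, ‖L0 v‖ = ‖v‖ := by
    intro v
    obtain ⟨a, ha⟩ := v.2
    have hv : v = ⟨G a, LinearMap.mem_range_self G a⟩ := Subtype.ext ha.symm
    rw [hv, hL0, ← hnorm]
    simp
  let L : (LinearMap.range G) →ₗᵢ[ℂ] V := ⟨L0, hL0norm⟩
  let W1 := L.extend
  have hWsurj : Function.Surjective W1 :=
    (LinearMap.injective_iff_surjective (f := W1.toLinearMap)).mp W1.injective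
  refine ⟨LinearIsometryEquiv.ofSurjective W1 hWsurj, ?_⟩
  intro i hi
  have him : i < m := by omega
  have hGe : G (EuclideanSpace.single ⟨i, him⟩ 1) = f ⟨i, by omega⟩ := by
    simp only [G, LinearMap.coe_mk, AddHom.coe_mk, EuclideanSpace.single_apply, ite_smul,
      one_smul, zero_smul]
    rw [Finset.sum_ite_eq' Finset.univ (⟨i, him⟩ : Fin m) (fun j => f ⟨(j : ℕ), hmN j⟩)]
    simp
  have hHe : H (EuclideanSpace.single ⟨i, him⟩ 1) = f ⟨i+1, hi⟩ := by
    simp only [H, LinearMap.coe_mk, AddHom.coe_mk, EuclideanSpace.single_apply, ite_smul,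
      one_smul, zero_smul]
    rw [Finset.sum_ite_eq' Finset.univ (⟨i, him⟩ : Fin m) (fun j => f ⟨(j : ℕ) + 1, hmN' j⟩)]
    simp
  have hcoe : (LinearIsometryEquiv.ofSurjective W1 hWsurj) (f ⟨i, by omega⟩)
      = W1 (f ⟨i, by omega⟩) := by
    rw [LinearIsometryEquiv.coe_ofSurjective]
  rw [hcoe, show f ⟨i, by omega⟩ =
    ((⟨G (EuclideanSpace.single ⟨i, him⟩ 1), LinearMap.mem_range_self G _⟩ :
      LinearMap.range G) : V) by simp [hGe], LinearIsometry.extend_apply]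
  show L0 _ = _
  rw [hL0, hHe]

end Isometry


open Module.End in
lemma toep_decomp {N : ℕ} (u : Fin N → ℂ) (hT : (Toep N u).PosSemidef) :
    ∃ (K : ℕ) (p : Fin K → ℝ) (θ : Fin K → ℝ),
      (∀ j, 0 ≤ p j) ∧ (∀ j, θ j ∈ Set.Ico (0:ℝ) 1) ∧
      ∀ a b : Fin N, Toep N u a b =
        ∑ j, (p j : ℂ) * (mu (θ j) ^ (a : ℕ)) * (starRingEnd ℂ) (mu (θ j) ^ (b : ℕ)) := by
  classical
  rcases Nat.eq_zero_or_pos N with h0 | h0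
  · subst h0
    exact ⟨0, Fin.elim0, Fin.elim0, fun j => j.elim0, fun j => j.elim0, fun a => a.elim0⟩
  obtain ⟨B, hB⟩ : ∃ B : Matrix (Fin N) (Fin N) ℂ, Toep N u = Bᴴ * B := by
    open scoped MatrixOrder in
    obtain ⟨B, hB⟩ := CStarAlgebra.nonneg_iff_eq_star_mul_self.mp hT.nonneg
    exact ⟨B, hB⟩
  let f : Fin N → EuclideanSpace ℂ (Fin N) :=
    fun i => (WithLp.equiv 2 (Fin N → ℂ)).symm (fun k => B k i)
  have hGram : ∀ a b, Toep N u a b = ⟪f a, f b⟫_ℂ := by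
    intro a b
    rw [hB]
    simp [Matrix.mul_apply, PiLp.inner_apply, RCLike.inner_apply, f,
      Matrix.conjTranspose_apply, mul_comm]
  have hshift : ∀ (i j : ℕ) (hi : i + 1 < N) (hj : j + 1 < N),
      ⟪f ⟨i+1, hi⟩, f ⟨j+1, hj⟩⟫_ℂ = ⟪f ⟨i, by omega⟩, f ⟨j, by omega⟩⟫_ℂ := by
    intro i j hi hj
    rw [← hGram, ← hGram, toep_shift]
  obtain ⟨W, hW⟩ := exists_shift_isometry f hshift
  let f0 : (EuclideanSpace ℂ (Fin N)) := f ⟨0, h0⟩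
  let Wl : (EuclideanSpace ℂ (Fin N)) →ₗ[ℂ] (EuclideanSpace ℂ (Fin N)) := W.toLinearEquiv.toLinearMap
  let Wsl : (EuclideanSpace ℂ (Fin N)) →ₗ[ℂ] (EuclideanSpace ℂ (Fin N)) := W.symm.toLinearEquiv.toLinearMap
  have hWl : ∀ v, Wl v = W v := fun v => rfl
  have hWsl : ∀ v, Wsl v = W.symm v := fun v => rfl
  have hWlWsl : Wl * Wsl = 1 := by
    ext v
    simp [Wl, Wsl, Module.End.mul_apply]
  have hWslWl : Wsl * Wl = 1 := by
    ext v
    simp [Wl, Wsl, Module.End.mul_apply]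
  have hWadj : ∀ x y, ⟪W x, y⟫_ℂ = ⟪x, W.symm y⟫_ℂ := by
    intro x y
    conv_lhs => rw [show y = W (W.symm y) from (W.apply_symm_apply y).symm]
    rw [W.inner_map_map]
  have hWadj' : ∀ x y, ⟪W.symm x, y⟫_ℂ = ⟪x, W y⟫_ℂ := by
    intro x y
    conv_lhs => rw [show y = W.symm (W y) from (W.symm_apply_apply y).symm]
    rw [W.symm.inner_map_map]
  set A := Wl + Wsl with hA_def
  set Bop := Complex.I • (Wsl - Wl) with hBop_def
  have hA : A.IsSymmetric := by
    intro x y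
    simp only [hA_def, LinearMap.add_apply, inner_add_left, inner_add_right, hWl, hWsl]
    rw [hWadj, hWadj']
    ring
  have hBop : Bop.IsSymmetric := by
    intro x y
    simp only [hBop_def, LinearMap.smul_apply, LinearMap.sub_apply, inner_smul_left,
      inner_smul_right, inner_sub_left, inner_sub_right, hWl, hWsl, Complex.conj_I]
    rw [hWadj, hWadj']
    ring
  have hcomm : Commute A Bop := by
    have key : (Wl + Wsl) * (Wsl - Wl) = (Wsl - Wl) * (Wl + Wsl) := by
      have e1 : (Wl + Wsl) * (Wsl - Wl) = Wsl * Wsl - Wl * Wl := by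
        rw [add_mul, mul_sub, mul_sub, hWlWsl, hWslWl]
        abel
      have e2 : (Wsl - Wl) * (Wl + Wsl) = Wsl * Wsl - Wl * Wl := by
        rw [sub_mul, mul_add, mul_add, hWlWsl, hWslWl]
        abel
      rw [e1, e2]
    show A * Bop = Bop * A
    rw [hBop_def, mul_smul_comm, smul_mul_assoc, key]
  have hInt := hA.directSum_isInternal_of_commute hBop hcomm
  obtain ⟨y, hy⟩ := hInt.2 f0
  have hf0 : f0 = ∑ γ ∈ y.support, ((y γ : (EuclideanSpace ℂ (Fin N)))) := by
    rw [← hy]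
    conv_lhs => rw [← DirectSum.sum_support_of y]
    rw [map_sum]
    simp
  set lam : ℂ × ℂ → ℂ := fun γ => (γ.2 + Complex.I * γ.1) / 2 with hlam_def
  have hWg : ∀ γ : ℂ × ℂ, W (y γ : (EuclideanSpace ℂ (Fin N))) = lam γ • (y γ : (EuclideanSpace ℂ (Fin N))) := by
    intro γ
    have h1 : A (y γ : (EuclideanSpace ℂ (Fin N))) = γ.2 • (y γ : (EuclideanSpace ℂ (Fin N))) := mem_eigenspace_iff.mp (y γ).2.1
    have h2 : Bop (y γ : (EuclideanSpace ℂ (Fin N))) = γ.1 • (y γ : (EuclideanSpace ℂ (Fin N))) := mem_eigenspace_iff.mp (y γ).2.2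
    have key : (2:ℂ) • (W (y γ : (EuclideanSpace ℂ (Fin N)))) = (γ.2 + Complex.I * γ.1) • (y γ : (EuclideanSpace ℂ (Fin N))) := by
      have hAB : A (y γ : (EuclideanSpace ℂ (Fin N))) + Complex.I • Bop (y γ : (EuclideanSpace ℂ (Fin N))) = (2:ℂ) • W (y γ : (EuclideanSpace ℂ (Fin N))) := by
        simp only [hA_def, hBop_def, LinearMap.add_apply, LinearMap.smul_apply,
          LinearMap.sub_apply, smul_smul, Complex.I_mul_I, hWl, hWsl, two_smul]
        rw [neg_one_smul]
        abel
      rw [← hAB, h1, h2, smul_smul, add_smul]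
    have : (2:ℂ) • (W (y γ : (EuclideanSpace ℂ (Fin N)))) = (2:ℂ) • (lam γ • (y γ : (EuclideanSpace ℂ (Fin N)))) := by
      rw [key, smul_smul, hlam_def]
      congr 1
      field_simp
    exact smul_right_injective (EuclideanSpace ℂ (Fin N)) two_ne_zero this
  have hlam1 : ∀ γ ∈ y.support, ‖lam γ‖ = 1 := by
    intro γ hγ
    have hg0 : (y γ : (EuclideanSpace ℂ (Fin N))) ≠ 0 := by
      simpa [Submodule.coe_eq_zero] using DFinsupp.mem_support_iff.mp hγ
    have h1 : ‖W (y γ : (EuclideanSpace ℂ (Fin N)))‖ = ‖(y γ : (EuclideanSpace ℂ (Fin N)))‖ := W.norm_map _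
    rw [hWg, norm_smul] at h1
    have hn : ‖(y γ : (EuclideanSpace ℂ (Fin N)))‖ ≠ 0 := norm_ne_zero_iff.mpr hg0
    have h2 : ‖lam γ‖ = 1 := by
      have := mul_right_cancel₀ hn (h1.trans (one_mul ‖(y γ : (EuclideanSpace ℂ (Fin N)))‖).symm)
      exact this
    rw [h2]
  have horth : ∀ γ δ : ℂ × ℂ, γ ≠ δ → ⟪(y γ : (EuclideanSpace ℂ (Fin N))), (y δ : (EuclideanSpace ℂ (Fin N)))⟫_ℂ = 0 := by
    intro γ δ hne
    have := (LinearMap.IsSymmetric.orthogonalFamily_eigenspace_inf_eigenspace hA hBop)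
      hne (y γ) (y δ)
    simpa using this
  have hpow : ∀ (k : ℕ) (hk : k < N), f ⟨k, hk⟩ = (Wl ^ k) f0 := by
    intro k
    induction k with
    | zero => intro hk; simp [f0]
    | succ n ih =>
      intro hk
      have hn : n < N := by omega
      have h1 : f ⟨n+1, hk⟩ = W (f ⟨n, hn⟩) := (hW n hk).symm
      rw [h1, ih hn, pow_succ', Module.End.mul_apply, hWl]
  have hWkg : ∀ (k : ℕ) (γ : ℂ × ℂ), (Wl ^ k) (y γ : (EuclideanSpace ℂ (Fin N))) = (lam γ)^k • (y γ : (EuclideanSpace ℂ (Fin N))) := by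
    intro k γ
    induction k with
    | zero => simp
    | succ n ih =>
      rw [pow_succ', Module.End.mul_apply, ih, LinearMap.map_smul, hWl, hWg, smul_smul,
        ← pow_succ]
  have hWkf0 : ∀ k : ℕ, (Wl ^ k) f0 = ∑ γ ∈ y.support, (lam γ)^k • (y γ : (EuclideanSpace ℂ (Fin N))) := by
    intro k
    rw [hf0, map_sum]
    exact Finset.sum_congr rfl fun γ _ => hWkg k γ
  have hinner : ∀ a b : Fin N, Toep N u a b =
      ∑ γ ∈ y.support,
        ((‖(y γ : (EuclideanSpace ℂ (Fin N)))‖^2 : ℝ) : ℂ) * ((starRingEnd ℂ) (lam γ))^(a:ℕ) * (lam γ)^(b:ℕ) := by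
    intro a b
    rw [hGram]
    have ha : f a = (Wl ^ (a:ℕ)) f0 := by
      have := hpow (a:ℕ) a.2
      simpa [Fin.eta] using this
    have hb : f b = (Wl ^ (b:ℕ)) f0 := by
      have := hpow (b:ℕ) b.2
      simpa [Fin.eta] using this
    rw [ha, hb, hWkf0, hWkf0, sum_inner]
    refine Finset.sum_congr rfl fun γ hγ => ?_
    rw [inner_sum]
    rw [Finset.sum_eq_single_of_mem γ hγ]
    · rw [inner_smul_left, inner_smul_right, inner_self_eq_norm_sq_to_K, map_pow]
      push_cast
      ring_nf
      norm_cast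
    · intro δ _ hδ
      rw [inner_smul_left, inner_smul_right, horth γ δ (Ne.symm hδ)]
      ring
  set K := y.support.card with hK
  let e : ↥y.support ≃ Fin K := y.support.equivFin
  set p : Fin K → ℝ := fun j => ‖(y ((e.symm j : _) : ℂ × ℂ) : (EuclideanSpace ℂ (Fin N)))‖^2 with hp_def
  have hconjabs : ∀ j : Fin K, ‖(starRingEnd ℂ) (lam (e.symm j))‖ = 1 := by
    intro j
    rw [Complex.norm_conj]
    exact hlam1 _ (e.symm j).2
  choose θ hθIco hθeq using fun j : Fin K =>
    exists_theta ((starRingEnd ℂ) (lam ((e.symm j : _) : ℂ × ℂ))) (hconjabs j)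
  refine ⟨K, p, θ, fun j => sq_nonneg _, hθIco, ?_⟩
  intro a b
  rw [hinner a b, ← Finset.sum_coe_sort y.support, ← Equiv.sum_comp e.symm]
  refine Finset.sum_congr rfl fun j _ => ?_
  simp only [hθeq, map_pow, Complex.conj_conj, hp_def]


lemma star_dot_comm {N : ℕ} (v x : Fin N → ℂ) :
    star x ⬝ᵥ v = (starRingEnd ℂ) (star v ⬝ᵥ x) := by
  simp only [dotProduct, map_sum, Pi.star_apply]
  refine Finset.sum_congr rfl fun i _ => ?_
  simp only [RCLike.star_def, _root_.map_mul, Complex.conj_conj]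
  ring

lemma blockV_quad (N : ℕ) (u x : Fin N → ℂ) (t : ℝ) (v : Fin N → ℂ) (c : ℂ) :
    star (Sum.elim v (fun _ : Unit => c)) ⬝ᵥ
      (blockV N u x t).mulVec (Sum.elim v (fun _ => c)) =
    star v ⬝ᵥ (Toep N u).mulVec v + c * (star v ⬝ᵥ x)
      + (starRingEnd ℂ) c * (star x ⬝ᵥ v) + (starRingEnd ℂ) c * c * t := by
  have hstar : star (Sum.elim v (fun _ : Unit => c))
      = Sum.elim (star v) (fun _ => (starRingEnd ℂ) c) := by
    funext i; cases i <;> rfl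
  rw [blockV, hstar, Matrix.fromBlocks_mulVec, sumElim_dotProduct_sumElim,
    dotProduct_add, dotProduct_add]
  simp only [Matrix.mulVec, dotProduct, Matrix.of_apply, Fintype.sum_unique,
    Pi.star_apply, RCLike.star_def, Finset.mul_sum, Sum.elim_comp_inl, Sum.elim_comp_inr,
    Sum.elim_inl, Sum.elim_inr]
  rw [show (∑ i : Fin N, (starRingEnd ℂ) (v i) * (x i * c))
      = ∑ i : Fin N, c * ((starRingEnd ℂ) (v i) * x i) from
    Finset.sum_congr rfl fun i _ => by ring]
  ring

end SdpAux


/-- **lower bound in the SDP characterization of the vector atomic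
norm.** If `[[Toep(u), x], [xᴴ, t]]` is positive semidefinite, then
`‖x‖_{𝒜_f} ≤ (1/(2N)) tr(Toep(u)) + t/2`. -/
theorem sdp_lower_bound_vector (N : ℕ) (x u : Fin N → ℂ) (t : ℝ)
    (hpsd : (blockV N u x t).PosSemidef) :
    atomicNormF N x ≤ (Matrix.trace (Toep N u)).re / (2 * N) + t / 2 := by
  classical
  have hbdd : BddBelow { s : ℝ | ∃ (K : ℕ) (α : Fin K → ℂ) (φ : Fin K → ℝ),
      (∀ i, φ i ∈ Set.Ico (0 : ℝ) 1) ∧ x = ∑ i, α i • dvec N (φ i) ∧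
      s = ∑ i, ‖α i‖ } := by
    refine ⟨0, fun s hs => ?_⟩
    obtain ⟨K, α, φ, -, -, rfl⟩ := hs
    exact Finset.sum_nonneg fun i _ => norm_nonneg _
  rcases Nat.eq_zero_or_pos N with h0 | h0
  · subst h0
    have ht : 0 ≤ t := by
      have h := hpsd.dotProduct_mulVec_nonneg (Sum.elim 0 (fun _ => 1))
      rw [SdpAux.blockV_quad] at h
      simp only [dotProduct, Finset.univ_eq_empty, Finset.sum_empty, mul_zero, zero_add,
        _root_.map_one, one_mul, add_zero] at h
      exact Complex.zero_le_real.mp h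
    have hmem : (0:ℝ) ∈ { s : ℝ | ∃ (K : ℕ) (α : Fin K → ℂ) (φ : Fin K → ℝ),
        (∀ i, φ i ∈ Set.Ico (0 : ℝ) 1) ∧ x = ∑ i, α i • dvec 0 (φ i) ∧
        s = ∑ i, ‖α i‖ } :=
      ⟨0, Fin.elim0, Fin.elim0, fun i => i.elim0, by funext a; exact a.elim0, by simp⟩
    have h1 : atomicNormF 0 x ≤ 0 := csInf_le hbdd hmem
    have htr : Matrix.trace (Toep 0 u) = 0 := by
      simp [Matrix.trace]
    rw [htr]
    simp only [Complex.zero_re, Nat.cast_zero, mul_zero, div_zero, zero_add]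
    linarith
  -- positive dimension
  have hT : (Toep N u).PosSemidef := by
    have h := hpsd.submatrix Sum.inl
    have he : (blockV N u x t).submatrix Sum.inl Sum.inl = Toep N u := by
      ext i j; rfl
    rwa [he] at h
  have hkerx : ∀ v : Fin N → ℂ, (Toep N u).mulVec v = 0 → star v ⬝ᵥ x = 0 := by
    intro v hv
    by_contra hz0
    set z := star v ⬝ᵥ x with hz_def
    set ε : ℝ := (|t| + 1)⁻¹ with hε_def
    have hε : 0 < ε := by positivity
    have h := hpsd.dotProduct_mulVec_nonneg (Sum.elim v (fun _ => -(ε:ℂ) * (starRingEnd ℂ) z))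
    rw [SdpAux.blockV_quad, hv, dotProduct_zero, SdpAux.star_dot_comm v x,
      ← hz_def] at h
    have hc : (0:ℂ) + -(ε:ℂ) * (starRingEnd ℂ) z * z
        + (starRingEnd ℂ) (-(ε:ℂ) * (starRingEnd ℂ) z) * (starRingEnd ℂ) z
        + (starRingEnd ℂ) (-(ε:ℂ) * (starRingEnd ℂ) z) * (-(ε:ℂ) * (starRingEnd ℂ) z) * t
        = ((ε * Complex.normSq z * (ε * t - 2) : ℝ) : ℂ) := by
      simp only [_root_.map_mul, _root_.map_neg, Complex.conj_conj, Complex.conj_ofReal]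
      push_cast
      linear_combination ((ε:ℂ)^2 * (t:ℂ) - 2*(ε:ℂ)) * Complex.mul_conj z
    rw [hc] at h
    have hre : 0 ≤ ε * Complex.normSq z * (ε * t - 2) := Complex.zero_le_real.mp h
    have hzpos : 0 < Complex.normSq z := Complex.normSq_pos.mpr hz0
    have hεt : ε * (|t| + 1) = 1 := inv_mul_cancel₀ (by positivity)
    have h1 : ε * t ≤ ε * |t| := mul_le_mul_of_nonneg_left (le_abs_self t) hε.le
    have h2 : ε * |t| + ε = 1 := by rw [← hεt]; ring
    have h3 : ε * Complex.normSq z * (ε * t - 2) < 0 :=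
      mul_neg_of_pos_of_neg (mul_pos hε hzpos) (by linarith)
    linarith
  obtain ⟨w, hw⟩ : ∃ w : Fin N → ℂ, (Toep N u).mulVec w = x := by
    set Te := Matrix.toEuclideanLin (Toep N u) with hTe_def
    have hsym : Te.IsSymmetric := Matrix.isHermitian_iff_isSymmetric.mp hT.1
    have hle : LinearMap.range Te ≤ (LinearMap.ker Te)ᗮ := by
      rintro z ⟨v, rfl⟩
      rw [Submodule.mem_orthogonal]
      intro k hk
      rw [← hsym k v, LinearMap.mem_ker.mp hk, inner_zero_left]
    have heq : LinearMap.range Te = (LinearMap.ker Te)ᗮ := by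
      apply Submodule.eq_of_le_of_finrank_le hle
      have h1 := LinearMap.finrank_range_add_finrank_ker Te
      have h2 := Submodule.finrank_add_finrank_orthogonal (K := LinearMap.ker Te)
      omega
    have hxmem : (WithLp.equiv 2 (Fin N → ℂ)).symm x ∈ (LinearMap.ker Te)ᗮ := by
      rw [Submodule.mem_orthogonal]
      intro k hk
      have hk0 : (Toep N u).mulVec (WithLp.equiv 2 (Fin N → ℂ) k) = 0 := by
        have h3 := LinearMap.mem_ker.mp hk
        apply_fun (WithLp.equiv 2 (Fin N → ℂ)) at h3
        exact h3
      have h5 := hkerx (WithLp.equiv 2 (Fin N → ℂ) k) hk0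
      simpa [PiLp.inner_apply, RCLike.inner_apply, dotProduct, mul_comm] using h5
    rw [← heq] at hxmem
    obtain ⟨we, hwe⟩ := hxmem
    refine ⟨WithLp.equiv 2 (Fin N → ℂ) we, ?_⟩
    have h6 : Te we = (WithLp.equiv 2 (Fin N → ℂ)).symm
        ((Toep N u).mulVec (WithLp.equiv 2 (Fin N → ℂ) we)) := rfl
    rw [h6] at hwe
    exact (WithLp.equiv 2 (Fin N → ℂ)).symm.injective hwe
  obtain ⟨K, p, θ, hp, hθIco, hdec⟩ := SdpAux.toep_decomp u hT
  set d : Fin K → Fin N → ℂ := fun j => dvec N (θ j) with hd_def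
  have hdv : ∀ (j : Fin K) (a : Fin N), d j a = SdpAux.mu (θ j) ^ (a:ℕ) :=
    fun j a => SdpAux.dvec_apply N (θ j) a
  have hdec' : ∀ a b : Fin N, Toep N u a b
      = ∑ j, (p j : ℂ) * d j a * (starRingEnd ℂ) (d j b) := by
    intro a b
    rw [hdec a b]
    exact Finset.sum_congr rfl fun j _ => by rw [hdv, hdv]
  set c : Fin K → ℂ := fun j => star (d j) ⬝ᵥ w with hc_def
  set α : Fin K → ℂ := fun j => (p j : ℂ) * c j with hα_def
  have hxa : ∀ a : Fin N, x a = ∑ j, α j * d j a := by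
    intro a
    have h1 : x a = ∑ b, Toep N u a b * w b := by rw [← hw]; rfl
    have h2 : ∀ b : Fin N, Toep N u a b * w b
        = ∑ j, (p j : ℂ) * d j a * (starRingEnd ℂ) (d j b) * w b := by
      intro b; rw [hdec' a b, Finset.sum_mul]
    rw [h1, Finset.sum_congr rfl fun b _ => h2 b, Finset.sum_comm]
    refine Finset.sum_congr rfl fun j _ => ?_
    rw [hα_def, hc_def]
    simp only [dotProduct, Pi.star_apply, RCLike.star_def, Finset.mul_sum,
      Finset.sum_mul]
    exact Finset.sum_congr rfl fun b _ => by ring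
  have hx : x = ∑ j, α j • dvec N (θ j) := by
    funext a
    rw [hxa a, Finset.sum_apply]
    exact Finset.sum_congr rfl fun j _ => rfl
  set S : ℝ := ∑ j, p j * Complex.normSq (c j) with hS_def
  have hconjc : ∀ j, (starRingEnd ℂ) (c j) = ∑ a, d j a * (starRingEnd ℂ) (w a) := by
    intro j
    rw [hc_def]
    simp only [dotProduct, map_sum, Pi.star_apply, RCLike.star_def, _root_.map_mul,
      Complex.conj_conj]
  have hwx : star w ⬝ᵥ x = (S : ℂ) := by
    have h1 : star w ⬝ᵥ x = ∑ a, (starRingEnd ℂ) (w a) * x a := rfl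
    have h2 : ∀ a : Fin N, (starRingEnd ℂ) (w a) * x a
        = ∑ j, α j * d j a * (starRingEnd ℂ) (w a) := by
      intro a
      rw [hxa a, Finset.mul_sum]
      exact Finset.sum_congr rfl fun j _ => by ring
    rw [h1, Finset.sum_congr rfl fun a _ => h2 a, Finset.sum_comm, hS_def]
    push_cast
    refine Finset.sum_congr rfl fun j _ => ?_
    rw [show (∑ a, α j * d j a * (starRingEnd ℂ) (w a))
        = α j * ∑ a, d j a * (starRingEnd ℂ) (w a) by
      rw [Finset.mul_sum]; exact Finset.sum_congr rfl fun a _ => by ring]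
    rw [← hconjc j, hα_def, mul_assoc, Complex.mul_conj]
  have hSt : S ≤ t := by
    have h := hpsd.dotProduct_mulVec_nonneg (Sum.elim w (fun _ => (-1 : ℂ)))
    rw [SdpAux.blockV_quad, hw, SdpAux.star_dot_comm w x, hwx] at h
    have hc2 : (S:ℂ) + (-1:ℂ) * (S:ℂ) + (starRingEnd ℂ) (-1:ℂ) * (starRingEnd ℂ) ((S:ℝ):ℂ)
        + (starRingEnd ℂ) (-1:ℂ) * (-1:ℂ) * t = ((t - S : ℝ) : ℂ) := by
      simp only [_root_.map_neg, _root_.map_one, Complex.conj_ofReal]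
      push_cast
      ring
    rw [hc2] at h
    have := Complex.zero_le_real.mp h
    linarith
  have hS0 : 0 ≤ S :=
    Finset.sum_nonneg fun j _ => mul_nonneg (hp j) (Complex.normSq_nonneg _)
  have ht : 0 ≤ t := le_trans hS0 hSt
  set P : ℝ := ∑ j, p j with hP_def
  have hP0 : 0 ≤ P := Finset.sum_nonneg fun j _ => hp j
  have htr : Matrix.trace (Toep N u) = ((N * P : ℝ) : ℂ) := by
    rw [Matrix.trace]
    have h1 : ∀ a : Fin N, Matrix.diag (Toep N u) a = ((P:ℝ):ℂ) := by
      intro a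
      rw [Matrix.diag_apply, hdec a a, hP_def]
      push_cast
      refine Finset.sum_congr rfl fun j _ => ?_
      rw [mul_assoc, Complex.mul_conj,
        show Complex.normSq (SdpAux.mu (θ j) ^ (a:ℕ)) = 1 by
          rw [Complex.normSq_eq_norm_sq, norm_pow, SdpAux.abs_mu, one_pow, one_pow]]
      simp
    rw [Finset.sum_congr rfl fun a _ => h1 a, Finset.sum_const, Finset.card_univ,
      Fintype.card_fin, nsmul_eq_mul]
    push_cast
    ring
  have htrre : (Matrix.trace (Toep N u)).re = N * P := by rw [htr, Complex.ofReal_re]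
  have hmem : (∑ j, ‖α j‖) ∈ { s : ℝ | ∃ (K : ℕ) (α : Fin K → ℂ) (φ : Fin K → ℝ),
      (∀ i, φ i ∈ Set.Ico (0 : ℝ) 1) ∧ x = ∑ i, α i • dvec N (φ i) ∧
      s = ∑ i, ‖α i‖ } := ⟨K, α, θ, hθIco, hx, rfl⟩
  have h1 : atomicNormF N x ≤ ∑ j, ‖α j‖ := csInf_le hbdd hmem
  have habs : ∀ j, ‖α j‖ = p j * ‖c j‖ := by
    intro j
    rw [hα_def]
    simp only [norm_mul, Complex.norm_real, Real.norm_eq_abs, abs_of_nonneg (hp j)]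
  have hL2 : (∑ j, p j * ‖c j‖)^2 ≤ P * S := by
    have h := Finset.sum_mul_sq_le_sq_mul_sq Finset.univ (fun j => Real.sqrt (p j))
      (fun j => Real.sqrt (p j) * ‖c j‖)
    rw [Finset.sum_congr rfl (fun j (_ : j ∈ Finset.univ) =>
        show Real.sqrt (p j) * (Real.sqrt (p j) * ‖c j‖)
          = p j * ‖c j‖ by rw [← mul_assoc, Real.mul_self_sqrt (hp j)])] at h
    rw [Finset.sum_congr rfl (fun j (_ : j ∈ Finset.univ) =>
        show Real.sqrt (p j) ^ 2 = p j from Real.sq_sqrt (hp j))] at h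
    rw [Finset.sum_congr rfl (fun j (_ : j ∈ Finset.univ) =>
        show (Real.sqrt (p j) * ‖c j‖)^2 = p j * Complex.normSq (c j) by
          rw [mul_pow, Real.sq_sqrt (hp j), Complex.sq_norm])] at h
    rw [← hP_def, ← hS_def] at h
    exact h
  have hL0 : 0 ≤ ∑ j, p j * ‖c j‖ :=
    Finset.sum_nonneg fun j _ => mul_nonneg (hp j) (norm_nonneg _)
  have hL2' : (∑ j, p j * ‖c j‖)^2 ≤ P * t :=
    le_trans hL2 (mul_le_mul_of_nonneg_left hSt hP0)
  have hfin : (∑ j, ‖α j‖) ≤ P/2 + t/2 := by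
    rw [Finset.sum_congr rfl fun j _ => habs j]
    nlinarith [hL2', hL0, hP0, ht, sq_nonneg (P - t),
      sq_nonneg ((∑ j, p j * ‖c j‖) - (P + t)/2)]
  have hrhs : (Matrix.trace (Toep N u)).re / (2*N) + t/2 = P/2 + t/2 := by
    rw [htrre]
    have hN : (N:ℝ) ≠ 0 := Nat.cast_ne_zero.mpr (by omega)
    field_simp
  rw [hrhs]
  exact le_trans h1 hfin
end

section
/- Lower bound in the SDP characterization of the matrix atomic norm: Let X ∈ ℂ^{L×N}, u ∈ ℂ^N, and let T ∈ ℂ^{L×L} be Hermitian, such that the block matrix [[Toep(u), X^H], [X, T]] ∈ ℂ^{(N+L)×(N+L)} is positive semidefinite. Then ‖X‖_{𝒜_n} ≤ (1/(2N)) trace(Toep(u)) + (1/2) trace(T). -/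
open Real Matrix ComplexOrder

/-- The `(N+L) × (N+L)` block matrix `[[Toep(u), Xᴴ], [X, T]]`. -/
noncomputable def blockN (N L : ℕ) (u : Fin N → ℂ) (X : Matrix (Fin L) (Fin N) ℂ)
    (T : Matrix (Fin L) (Fin L) ℂ) : Matrix (Fin N ⊕ Fin L) (Fin N ⊕ Fin L) ℂ :=
  Matrix.fromBlocks (Toep N u) Xᴴ X T

/-- The rank-one atom `z d(φ)ᴴ ∈ ℂ^{L×N}`. -/
noncomputable def atomMat (N L : ℕ) (z : EuclideanSpace ℂ (Fin L)) (φ : ℝ) :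
    Matrix (Fin L) (Fin N) ℂ :=
  Matrix.of fun l n => z l * star (dvec N φ n)

/-- The matrix atomic norm `‖X‖_{𝒜_n}` over the atoms
`𝒜_n = { z d(φ)ᴴ : φ ∈ [0,1), ‖z‖₂ = 1 }`: the infimum of `Σᵢ |βᵢ|` over finite
representations `X = Σᵢ βᵢ zᵢ d(φᵢ)ᴴ`. -/
noncomputable def atomicNormN (N L : ℕ) (X : Matrix (Fin L) (Fin N) ℂ) : ℝ :=
  sInf { s : ℝ | ∃ (K : ℕ) (β : Fin K → ℂ) (z : Fin K → EuclideanSpace ℂ (Fin L))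
    (φ : Fin K → ℝ), (∀ i, ‖z i‖ = 1) ∧ (∀ i, φ i ∈ Set.Ico (0 : ℝ) 1) ∧
    X = ∑ i, β i • atomMat N L (z i) (φ i) ∧ s = ∑ i, ‖β i‖ }

/-- The value of the SDP
`inf { (1/(2N)) tr(Toep(u)) + (1/2) tr(T) : T Hermitian, [[Toep(u), Xᴴ], [X, T]] ⪰ 0 }`. -/
noncomputable def sdpValN (N L : ℕ) (X : Matrix (Fin L) (Fin N) ℂ) : ℝ :=
  sInf { v : ℝ | ∃ (u : Fin N → ℂ) (T : Matrix (Fin L) (Fin L) ℂ), T.IsHermitian ∧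
    (blockN N L u X T).PosSemidef ∧
    v = (Matrix.trace (Toep N u)).re / (2 * N) + (Matrix.trace T).re / 2 }

open scoped ComplexInnerProductSpace

lemma unitary_exists_eigenfamily (n : ℕ) :
    ∀ (E : Type) (_ : NormedAddCommGroup E) (_ : InnerProductSpace ℂ E)
    (_ : FiniteDimensional ℂ E), Module.finrank ℂ E = n → ∀ U : E ≃ₗᵢ[ℂ] E,
    ∃ (f : Fin n → E) (μ : Fin n → ℂ),
      (∀ i j, ⟪f i, f j⟫ = if i = j then 1 else 0) ∧
      (∀ i, U (f i) = μ i • f i) ∧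
      (∀ x : E, x = ∑ i, ⟪f i, x⟫ • f i) := by
  induction n with
  | zero =>
    intro E _ _ _ hrank U
    have hsub : Subsingleton E := by
      rw [Module.finrank_zero_iff] at hrank; exact hrank
    refine ⟨Fin.elim0, Fin.elim0, fun i => i.elim0, fun i => i.elim0, fun x => ?_⟩
    simpa using (Subsingleton.elim x 0)
  | succ n ih =>
    intro E _ _ _ hrank U
    have : Nontrivial E := Module.nontrivial_of_finrank_pos (R := ℂ) (by omega)
    obtain ⟨μ₀, hμ₀⟩ := Module.End.exists_eigenvalue (U.toLinearEquiv : E →ₗ[ℂ] E)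
    obtain ⟨v, hv⟩ := hμ₀.exists_hasEigenvector
    have hv0 : v ≠ 0 := hv.right
    set e : E := ((‖v‖ : ℂ))⁻¹ • v with he_def
    have hUv : U v = μ₀ • v := hv.apply_eq_smul
    have he1 : ‖e‖ = 1 := by
      rw [he_def, norm_smul, norm_inv, Complex.norm_real, norm_norm,
        inv_mul_cancel₀ (norm_ne_zero_iff.mpr hv0)]
    have hUe : U e = μ₀ • e := by
      rw [he_def, _root_.map_smul, hUv, smul_comm]
    have hμabs : ‖μ₀‖ = 1 := by
      have := U.norm_map e
      rw [hUe, norm_smul, he1] at this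
      simpa using this
    have hμ0 : μ₀ ≠ 0 := by
      intro h; rw [h] at hμabs; simp at hμabs
    set W := (ℂ ∙ e)ᗮ with hW_def
    have hinv : ∀ w ∈ W, U w ∈ W := by
      intro w hw
      rw [Submodule.mem_orthogonal]
      intro x hx
      obtain ⟨c, rfl⟩ := Submodule.mem_span_singleton.mp hx
      have h1 : ⟪e, U w⟫ = 0 := by
        have : U ((μ₀)⁻¹ • e) = e := by
          rw [_root_.map_smul, hUe, smul_smul, inv_mul_cancel₀ hμ0, one_smul]
        calc ⟪e, U w⟫ = ⟪U ((μ₀)⁻¹ • e), U w⟫ := by rw [this]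
          _ = ⟪(μ₀)⁻¹ • e, w⟫ := U.inner_map_map _ _
          _ = (starRingEnd ℂ) (μ₀)⁻¹ * ⟪e, w⟫ := by rw [inner_smul_left]
          _ = 0 := by
            rw [hw e (Submodule.mem_span_singleton_self e)]; ring
      rw [inner_smul_left, h1, mul_zero]
    have he_unit : ⟪e, e⟫ = 1 := by
      have := inner_self_eq_norm_sq_to_K (𝕜 := ℂ) e
      rw [he1] at this; simpa using this
    have hrankW : Module.finrank ℂ (↥W) = n := by
      have h1 : Module.finrank ℂ (↥(ℂ ∙ e)) = 1 := by
        apply finrank_span_singleton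
        intro h; rw [h] at he1; simp at he1
      have h2 := Submodule.finrank_add_finrank_orthogonal (ℂ ∙ e)
      rw [h1, hrank] at h2
      rw [hW_def]
      omega
    -- restriction of U to W
    set L0 : ↥W →ₗ[ℂ] ↥W :=
      LinearMap.codRestrict W ((U.toLinearEquiv : E →ₗ[ℂ] E).comp W.subtype)
        (fun w => hinv w w.2) with hL0
    have hL0c : ∀ w : ↥W, (L0 w : E) = U w := fun w => rfl
    have hL0norm : ∀ w : ↥W, ‖L0 w‖ = ‖w‖ := by
      intro w
      rw [← Submodule.norm_coe, hL0c, U.norm_map, Submodule.norm_coe]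
    set Li : ↥W →ₗᵢ[ℂ] ↥W := ⟨L0, hL0norm⟩ with hLi
    have hinj : Function.Injective L0 := Li.injective
    have hLsurj0 : Function.Surjective L0 := LinearMap.injective_iff_surjective.mp hinj
    have hLsurj : Function.Surjective Li := hLsurj0
    obtain ⟨U', hU'⟩ : ∃ U' : ↥W ≃ₗᵢ[ℂ] ↥W, ∀ w, U' w = Li w :=
      ⟨LinearIsometryEquiv.ofSurjective Li hLsurj, fun w => rfl⟩
    obtain ⟨f', μ', horm', heig', hexp'⟩ := ih (↥W) inferInstance inferInstance inferInstance hrankW U'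
    have hfW : ∀ i, (f' i : E) ∈ W := fun i => (f' i).2
    have heorth : ∀ i, ⟪e, (f' i : E)⟫ = 0 := by
      intro i
      exact (hfW i) e (Submodule.mem_span_singleton_self e)
    refine ⟨Fin.cons e (fun i => (f' i : E)), Fin.cons μ₀ μ', ?_, ?_, ?_⟩
    · intro i j
      refine Fin.cases ?_ ?_ i <;> [skip; intro i'] <;> refine Fin.cases ?_ ?_ j <;>
        try intro j'
      · simpa using he_unit
      · simp only [Fin.cons_zero, Fin.cons_succ]
        rw [heorth j']
        simp [(Fin.succ_ne_zero j').symm]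
      · simp only [Fin.cons_zero, Fin.cons_succ]
        rw [← inner_conj_symm, heorth i']
        simp [Fin.succ_ne_zero i']
      · simp only [Fin.cons_succ]
        rw [show ⟪(f' i' : E), (f' j' : E)⟫ = ⟪f' i', f' j'⟫ from (Submodule.coe_inner W (f' i') (f' j')).symm, horm' i' j']
        simp [Fin.succ_inj]
    · intro i
      refine Fin.cases ?_ ?_ i
      · simpa using hUe
      · intro i'
        simp only [Fin.cons_succ]
        have h1 : U (f' i' : E) = ((U' (f' i') : ↥W) : E) := by
          rw [hU', hLi]; rfl
        rw [h1, heig' i']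
        simp
    · intro x
      set w : E := x - ⟪e, x⟫ • e with hw_def
      have hwW : w ∈ W := by
        rw [hW_def, Submodule.mem_orthogonal]
        intro y hy
        obtain ⟨c, rfl⟩ := Submodule.mem_span_singleton.mp hy
        rw [inner_smul_left, hw_def, inner_sub_right, inner_smul_right, he_unit,
          mul_one, sub_self, mul_zero]
      have hcoef : ∀ i, ⟪f' i, (⟨w, hwW⟩ : ↥W)⟫ = ⟪(f' i : E), x⟫ := by
        intro i
        rw [Submodule.coe_inner]
        show ⟪(f' i : E), w⟫ = ⟪(f' i : E), x⟫
        rw [hw_def, inner_sub_right, inner_smul_right, ← inner_conj_symm ((f' i : E)) e,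
          heorth i]
        simp
      have hw_exp := hexp' (⟨w, hwW⟩ : ↥W)
      have hw_expE : w = ∑ i : Fin n, ⟪(f' i : E), x⟫ • (f' i : E) := by
        have := congrArg (Submodule.subtype W) hw_exp
        simpa [hcoef] using this
      rw [Fin.sum_univ_succ]
      simp only [Fin.cons_zero, Fin.cons_succ]
      rw [← hw_expE, hw_def]
      abel

lemma exists_isometry_of_inner_eq {V : Type} [AddCommGroup V] [Module ℂ V]
    {E : Type} [NormedAddCommGroup E] [InnerProductSpace ℂ E] [FiniteDimensional ℂ E]
    (F G : V →ₗ[ℂ] E) (h : ∀ x y : V, ⟪F x, F y⟫ = ⟪G x, G y⟫) :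
    ∃ U : E ≃ₗᵢ[ℂ] E, ∀ x, U (F x) = G x := by
  classical
  set R := LinearMap.range F with hR
  set r := Module.finrank ℂ ↥R with hr_def
  set b := stdOrthonormalBasis ℂ ↥R with hb
  have hv : ∀ i : Fin r, ∃ x : V, F x = (b i : E) := by
    intro i
    exact LinearMap.mem_range.mp (b i).2
  choose v hFv using hv
  -- expansion of F x
  have hFexp : ∀ x : V, F x = ∑ i, ⟪F (v i), F x⟫ • F (v i) := by
    intro x
    have hmem : F x ∈ R := LinearMap.mem_range_self F x
    have h1 : (⟨F x, hmem⟩ : ↥R) = ∑ i, ⟪b i, (⟨F x, hmem⟩ : ↥R)⟫ • b i := by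
      conv_lhs => rw [← b.sum_repr (⟨F x, hmem⟩ : ↥R)]
      refine Finset.sum_congr rfl fun i _ => ?_
      rw [b.repr_apply_apply]
    calc F x = ((⟨F x, hmem⟩ : ↥R) : E) := rfl
      _ = ((∑ i, ⟪b i, (⟨F x, hmem⟩ : ↥R)⟫ • b i : ↥R) : E) := by rw [← h1]
      _ = ∑ i, ⟪b i, (⟨F x, hmem⟩ : ↥R)⟫ • (b i : E) := by
          push_cast
          rfl
      _ = ∑ i, ⟪F (v i), F x⟫ • F (v i) := by
          refine Finset.sum_congr rfl fun i _ => ?_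
          rw [Submodule.coe_inner, hFv i]
  have hG0 : ∀ x : V, F x = 0 → G x = 0 := by
    intro x hx
    have : ⟪G x, G x⟫ = 0 := by rw [← h, hx, inner_zero_left]
    exact inner_self_eq_zero.mp this
  have hGexp : ∀ x : V, G x = ∑ i, ⟪F (v i), F x⟫ • G (v i) := by
    intro x
    set xg := x - ∑ i, ⟪F (v i), F x⟫ • v i with hxg
    have hFxg : F xg = 0 := by
      rw [hxg, _root_.map_sub, _root_.map_sum]
      simp only [_root_.map_smul]
      rw [← hFexp x, sub_self]
    have hGxg := hG0 xg hFxg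
    rw [hxg, _root_.map_sub, _root_.map_sum] at hGxg
    simp only [_root_.map_smul] at hGxg
    have := sub_eq_zero.mp hGxg
    exact this
  -- orthonormality
  set m := Module.finrank ℂ E with hm
  have hrm : r ≤ m := Submodule.finrank_le R
  set s : Set (Fin m) := {i | (i : ℕ) < r} with hs
  set v1 : Fin m → E := fun i => if hi : (i : ℕ) < r then F (v ⟨i, hi⟩) else 0 with hv1
  set v2 : Fin m → E := fun i => if hi : (i : ℕ) < r then G (v ⟨i, hi⟩) else 0 with hv2
  have hinner_b : ∀ i j : Fin r, ⟪F (v i), F (v j)⟫ = if i = j then 1 else 0 := by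
    intro i j
    rw [hFv i, hFv j, show ⟪(b i : E), (b j : E)⟫ = ⟪b i, b j⟫ from
      (Submodule.coe_inner R (b i) (b j)).symm]
    exact orthonormal_iff_ite.mp b.orthonormal i j
  have horth1 : Orthonormal ℂ (s.restrict v1) := by
    rw [orthonormal_iff_ite]
    intro i j
    have hi := i.2
    have hj := j.2
    simp only [hs, Set.mem_setOf_eq] at hi hj
    simp only [Set.restrict, Set.domRestrict_apply, hv1, dif_pos hi, dif_pos hj]
    rw [hinner_b]
    congr 1
    simp [Fin.ext_iff, Subtype.ext_iff]
  have horth2 : Orthonormal ℂ (s.restrict v2) := by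
    rw [orthonormal_iff_ite]
    intro i j
    have hi := i.2
    have hj := j.2
    simp only [hs, Set.mem_setOf_eq] at hi hj
    simp only [Set.restrict, Set.domRestrict_apply, hv2, dif_pos hi, dif_pos hj]
    rw [← h, hinner_b]
    congr 1
    simp [Fin.ext_iff, Subtype.ext_iff]
  have hcard : Module.finrank ℂ E = Fintype.card (Fin m) := by simp [hm]
  obtain ⟨b₁, hb₁⟩ := horth1.exists_orthonormalBasis_extension_of_card_eq hcard
  obtain ⟨b₂, hb₂⟩ := horth2.exists_orthonormalBasis_extension_of_card_eq hcard
  refine ⟨b₁.repr.trans b₂.repr.symm, ?_⟩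
  intro x
  have hUb : ∀ i : Fin m, (b₁.repr.trans b₂.repr.symm) (b₁ i) = b₂ i := by
    intro i
    rw [LinearIsometryEquiv.trans_apply, b₁.repr_self, b₂.repr_symm_single]
  have hemb : ∀ i : Fin r, (⟨(i : ℕ), lt_of_lt_of_le i.2 hrm⟩ : Fin m) ∈ s := by
    intro i; simp [hs]
  have hFvb : ∀ i : Fin r, F (v i) = b₁ ⟨(i : ℕ), lt_of_lt_of_le i.2 hrm⟩ := by
    intro i
    rw [hb₁ _ (hemb i), hv1]
    simp only [dif_pos i.2]
  have hGvb : ∀ i : Fin r, G (v i) = b₂ ⟨(i : ℕ), lt_of_lt_of_le i.2 hrm⟩ := by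
    intro i
    rw [hb₂ _ (hemb i), hv2]
    simp only [dif_pos i.2]
  conv_lhs => rw [hFexp x]
  rw [map_sum]
  simp only [LinearIsometryEquiv.map_smul]
  rw [hGexp x]
  refine Finset.sum_congr rfl fun i _ => ?_
  rw [hFvb i, hUb, hGvb i]

set_option maxHeartbeats 3000000 in
open scoped ComplexInnerProductSpace in
/-- **lower bound in the SDP characterization of the matrix atomic
norm.** If `T` is Hermitian and `[[Toep(u), Xᴴ], [X, T]]` is positive
semidefinite, then `‖X‖_{𝒜_n} ≤ (1/(2N)) tr(Toep(u)) + (1/2) tr(T)`. -/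
theorem sdp_lower_bound_matrix (N L : ℕ) (X : Matrix (Fin L) (Fin N) ℂ)
    (u : Fin N → ℂ) (T : Matrix (Fin L) (Fin L) ℂ) (hT : T.IsHermitian)
    (hpsd : (blockN N L u X T).PosSemidef) :
    atomicNormN N L X ≤ (Matrix.trace (Toep N u)).re / (2 * N)
      + (Matrix.trace T).re / 2 := by
  classical
  obtain ⟨C, hC⟩ : ∃ C : Matrix (Fin N ⊕ Fin L) (Fin N ⊕ Fin L) ℂ, blockN N L u X T = Cᴴ * C := by
    open scoped MatrixOrder in
    exact CStarAlgebra.nonneg_iff_eq_star_mul_self.mp hpsd.nonneg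
  set col : (Fin N ⊕ Fin L) → EuclideanSpace ℂ (Fin N ⊕ Fin L) :=
    fun c => WithLp.toLp 2 (fun i => C i c) with hcol_def
  set a : Fin N → EuclideanSpace ℂ (Fin N ⊕ Fin L) :=
    fun n => col (Sum.inl n) with ha_def
  set g : Fin L → EuclideanSpace ℂ (Fin N ⊕ Fin L) :=
    fun l => col (Sum.inr l) with hg_def
  have hinner : ∀ c c' : Fin N ⊕ Fin L,
      (⟪col c, col c'⟫ : ℂ) = blockN N L u X T c c' := by
    intro c c'
    rw [hC, Matrix.mul_apply, PiLp.inner_apply]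
    refine Finset.sum_congr rfl fun i _ => ?_
    rw [Matrix.conjTranspose_apply, RCLike.inner_apply, hcol_def]
    exact mul_comm _ _
  have haa : ∀ n m : Fin N, (⟪a n, a m⟫ : ℂ) = Toep N u n m := by
    intro n m
    exact (hinner (Sum.inl n) (Sum.inl m)).trans (by simp [blockN, Matrix.fromBlocks])
  have hga : ∀ (l : Fin L) (n : Fin N), (⟪g l, a n⟫ : ℂ) = X l n := by
    intro l n
    exact (hinner (Sum.inr l) (Sum.inl n)).trans (by simp [blockN, Matrix.fromBlocks])
  have hgg : ∀ l : Fin L, (⟪g l, g l⟫ : ℂ) = T l l := by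
    intro l
    exact (hinner (Sum.inr l) (Sum.inr l)).trans (by simp [blockN, Matrix.fromBlocks])
  have htr1_nonneg : 0 ≤ (Matrix.trace (Toep N u)).re := by
    rw [Matrix.trace, Complex.re_sum]
    refine Finset.sum_nonneg fun n _ => ?_
    rw [Matrix.diag_apply, ← haa n n]
    simpa using inner_self_nonneg (𝕜 := ℂ) (x := a n)
  have htrT : (Matrix.trace T).re = ∑ l, Complex.re (⟪g l, g l⟫ : ℂ) := by
    rw [Matrix.trace, Complex.re_sum]
    refine Finset.sum_congr rfl fun l _ => ?_
    rw [Matrix.diag_apply, hgg l]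
  have htrT_nonneg : 0 ≤ (Matrix.trace T).re := by
    rw [htrT]
    exact Finset.sum_nonneg fun l _ => by
      simpa using inner_self_nonneg (𝕜 := ℂ) (x := g l)
  have hbdd : BddBelow {s : ℝ | ∃ (K : ℕ) (β : Fin K → ℂ)
      (z : Fin K → EuclideanSpace ℂ (Fin L)) (φ : Fin K → ℝ),
      (∀ i, ‖z i‖ = 1) ∧ (∀ i, φ i ∈ Set.Ico (0 : ℝ) 1) ∧
      X = ∑ i, β i • atomMat N L (z i) (φ i) ∧ s = ∑ i, ‖β i‖} := by
    refine ⟨0, fun s hs => ?_⟩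
    obtain ⟨K, β, z, φ, _, _, _, rfl⟩ := hs
    positivity
  -- trivial cases
  by_cases hNL : N = 0 ∨ L = 0
  · have hmem : (0 : ℝ) ∈ {s : ℝ | ∃ (K : ℕ) (β : Fin K → ℂ)
        (z : Fin K → EuclideanSpace ℂ (Fin L)) (φ : Fin K → ℝ),
        (∀ i, ‖z i‖ = 1) ∧ (∀ i, φ i ∈ Set.Ico (0 : ℝ) 1) ∧
        X = ∑ i, β i • atomMat N L (z i) (φ i) ∧ s = ∑ i, ‖β i‖} := by
      refine ⟨0, Fin.elim0, Fin.elim0, Fin.elim0, fun i => i.elim0, fun i => i.elim0, ?_, by simp⟩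
      rw [Finset.univ_eq_empty, Finset.sum_empty]
      ext l n
      rcases hNL with h0 | h0
      · subst h0; exact n.elim0
      · subst h0; exact l.elim0
    have h1 : atomicNormN N L X ≤ 0 := csInf_le hbdd hmem
    refine h1.trans (add_nonneg (div_nonneg htr1_nonneg (by positivity)) ?_)
    linarith
  push_neg at hNL
  obtain ⟨hN0, hL0⟩ := hNL
  obtain ⟨M, rfl⟩ : ∃ M, N = M + 1 := ⟨N - 1, by omega⟩
  have hL : 0 < L := Nat.pos_of_ne_zero hL0
  -- Toeplitz structure
  have htoep_shift : ∀ j k : Fin M,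
      Toep (M + 1) u j.castSucc k.castSucc = Toep (M + 1) u j.succ k.succ := by
    intro j k
    simp only [Toep, Matrix.of_apply, Fin.val_succ, Fin.coe_castSucc]
    split_ifs with h1 h2 h2
    · congr 1
      simp only [Fin.mk.injEq]
      omega
    · omega
    · omega
    · congr 2
      simp only [Fin.mk.injEq]
      omega
  have hshift : ∀ j k : Fin M, (⟪a j.castSucc, a k.castSucc⟫ : ℂ) = ⟪a j.succ, a k.succ⟫ := by
    intro j k
    rw [haa, haa, htoep_shift]
  -- the shift operator
  set F : (Fin M → ℂ) →ₗ[ℂ] EuclideanSpace ℂ (Fin (M + 1) ⊕ Fin L) :=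
    ∑ k : Fin M, LinearMap.smulRight (LinearMap.proj k) (a k.castSucc) with hF_def
  set G : (Fin M → ℂ) →ₗ[ℂ] EuclideanSpace ℂ (Fin (M + 1) ⊕ Fin L) :=
    ∑ k : Fin M, LinearMap.smulRight (LinearMap.proj k) (a k.succ) with hG_def
  have hFapp : ∀ c, F c = ∑ k, c k • a k.castSucc := by
    intro c
    rw [hF_def]
    simp [LinearMap.sum_apply, LinearMap.smulRight_apply]
  have hGapp : ∀ c, G c = ∑ k, c k • a k.succ := by
    intro c
    rw [hG_def]
    simp [LinearMap.sum_apply, LinearMap.smulRight_apply]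
  have hFG : ∀ c c' : Fin M → ℂ, (⟪F c, F c'⟫ : ℂ) = ⟪G c, G c'⟫ := by
    intro c c'
    rw [hFapp, hFapp, hGapp, hGapp, sum_inner, sum_inner]
    refine Finset.sum_congr rfl fun k _ => ?_
    rw [inner_sum, inner_sum]
    refine Finset.sum_congr rfl fun k' _ => ?_
    rw [inner_smul_left, inner_smul_left, inner_smul_right, inner_smul_right, hshift k k']
  obtain ⟨U, hU⟩ := exists_isometry_of_inner_eq F G hFG
  have hUa : ∀ k : Fin M, U (a k.castSucc) = a k.succ := by
    intro k
    have h1 := hU (Pi.single k 1)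
    rw [hFapp, hGapp] at h1
    rw [Finset.sum_eq_single k (fun b _ hb => by rw [Pi.single_eq_of_ne hb, zero_smul])
      (fun h => absurd (Finset.mem_univ k) h),
      Finset.sum_eq_single k (fun b _ hb => by rw [Pi.single_eq_of_ne hb, zero_smul])
      (fun h => absurd (Finset.mem_univ k) h), Pi.single_eq_same, one_smul, one_smul] at h1
    exact h1
  -- spectral decomposition
  have hrank : Module.finrank ℂ (EuclideanSpace ℂ (Fin (M + 1) ⊕ Fin L)) = M + 1 + L := by
    simp [finrank_euclideanSpace]
  obtain ⟨f, μ, horm, heig, hexp⟩ := unitary_exists_eigenfamily (M + 1 + L)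
    (EuclideanSpace ℂ (Fin (M + 1) ⊕ Fin L)) inferInstance inferInstance inferInstance hrank U
  have hfnorm : ∀ j, ‖f j‖ = 1 := by
    intro j
    have h1 := inner_self_eq_norm_sq_to_K (𝕜 := ℂ) (f j)
    rw [horm j j, if_pos rfl] at h1
    have h2 : ((1 : ℝ) : ℂ) = ((‖f j‖ ^ 2 : ℝ) : ℂ) := by push_cast; exact h1
    have h3 : (1 : ℝ) = ‖f j‖ ^ 2 := Complex.ofReal_inj.mp h2
    nlinarith [norm_nonneg (f j)]
  have hmu : ∀ j, ‖μ j‖ = 1 := by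
    intro j
    have h1 := U.norm_map (f j)
    rw [heig j, norm_smul, hfnorm j, mul_one] at h1
    exact h1
  set α : Fin (M + 1 + L) → ℂ := fun j => ⟪f j, a 0⟫ with hα_def
  have hak : ∀ (k : ℕ) (hk : k < M + 1),
      a ⟨k, hk⟩ = ∑ j, (μ j ^ k * α j) • f j := by
    intro k
    induction k with
    | zero =>
      intro hk
      have h0 : (⟨0, hk⟩ : Fin (M + 1)) = 0 := rfl
      rw [h0]
      calc a 0 = ∑ j, (⟪f j, a 0⟫ : ℂ) • f j := hexp (a 0)
        _ = ∑ j, (μ j ^ 0 * α j) • f j := by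
            refine Finset.sum_congr rfl fun j _ => ?_
            rw [pow_zero, one_mul]
    | succ k ihk =>
      intro hk
      have hk' : k < M + 1 := by omega
      have hkM : k < M := by omega
      have hsucc : (⟨k + 1, hk⟩ : Fin (M + 1)) = (⟨k, hkM⟩ : Fin M).succ := rfl
      have hcast : (⟨k, hk'⟩ : Fin (M + 1)) = (⟨k, hkM⟩ : Fin M).castSucc := rfl
      rw [hsucc, ← hUa ⟨k, hkM⟩, ← hcast, ihk hk', map_sum]
      refine Finset.sum_congr rfl fun j _ => ?_
      rw [LinearIsometryEquiv.map_smul, heig j, smul_smul]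
      congr 1
      rw [pow_succ]
      ring
  -- frequencies
  set φv : Fin (M + 1 + L) → ℝ := fun j => Int.fract (Complex.arg (μ j) / (-(2 * Real.pi)))
    with hφv_def
  have hφv01 : ∀ j, φv j ∈ Set.Ico (0 : ℝ) 1 :=
    fun j => ⟨Int.fract_nonneg _, Int.fract_lt_one _⟩
  have hdvec : ∀ (j : Fin (M + 1 + L)) (n : Fin (M + 1)),
      star (dvec (M + 1) (φv j) n) = μ j ^ (n : ℕ) := by
    intro j n
    have hpi : (2 * Real.pi) ≠ 0 := by positivity
    set θ := Complex.arg (μ j) with hθ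
    set t : ℤ := ⌊θ / (-(2 * Real.pi))⌋ with ht
    have hfr : φv j = θ / (-(2 * Real.pi)) - t := rfl
    have hreal : -(2 * Real.pi * (n : ℕ) * φv j)
        = (n : ℕ) * θ + ((n : ℤ) * t : ℤ) * (2 * Real.pi) := by
      rw [hfr]
      field_simp
      push_cast
      ring
    have hμj : μ j = Complex.exp (θ * Complex.I) := by
      conv_lhs => rw [← Complex.norm_mul_exp_arg_mul_I (μ j)]
      rw [show ‖μ j‖ = 1 from hmu j, Complex.ofReal_one, one_mul]
    have hstar : star (dvec (M + 1) (φv j) n)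
        = Complex.exp (((-(2 * Real.pi * (n : ℕ) * φv j) : ℝ) : ℂ) * Complex.I) := by
      simp only [dvec, Complex.star_def, ← Complex.exp_conj, _root_.map_mul, map_ofNat, Complex.conj_I,
        Complex.conj_ofReal]
      congr 1
      push_cast
      ring
    rw [hstar, hreal, hμj, ← Complex.exp_nat_mul]
    push_cast
    rw [add_mul, Complex.exp_add]
    rw [show ((n : ℂ) * t) * (2 * Real.pi) * Complex.I = ((n : ℤ) * t : ℤ) * (2 * Real.pi * Complex.I) by push_cast; ring]
    rw [Complex.exp_int_mul_two_pi_mul_I]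
    rw [mul_one]
    congr 1
    ring
  -- the weight vectors
  set h : Fin (M + 1 + L) → EuclideanSpace ℂ (Fin L) :=
    fun j => WithLp.toLp 2 (fun l => (⟪g l, f j⟫ : ℂ)) with hh_def
  set w : Fin (M + 1 + L) → EuclideanSpace ℂ (Fin L) :=
    fun j => α j • h j with hw_def
  have hwl : ∀ j l, w j l = α j * ⟪g l, f j⟫ := fun j l => rfl
  have hXln : ∀ (l : Fin L) (n : Fin (M + 1)),
      X l n = ∑ j, w j l * star (dvec (M + 1) (φv j) n) := by
    intro l n
    have h1 : a n = ∑ j, (μ j ^ (n : ℕ) * α j) • f j := by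
      have := hak (n : ℕ) n.2
      rwa [Fin.eta] at this
    rw [← hga l n, h1, inner_sum]
    refine Finset.sum_congr rfl fun j _ => ?_
    rw [inner_smul_right, hwl, hdvec]
    ring
  -- atoms
  set z : Fin (M + 1 + L) → EuclideanSpace ℂ (Fin L) := fun j =>
    if hwj : w j = 0 then EuclideanSpace.single (⟨0, hL⟩ : Fin L) (1 : ℂ)
    else (‖w j‖ : ℂ)⁻¹ • w j with hz_def
  set β : Fin (M + 1 + L) → ℂ := fun j => (‖w j‖ : ℂ) with hβ_def
  have hznorm : ∀ j, ‖z j‖ = 1 := by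
    intro j
    simp only [hz_def]
    by_cases hwj : w j = 0
    · rw [dif_pos hwj, EuclideanSpace.norm_single]
      simp
    · rw [dif_neg hwj, norm_smul]
      rw [norm_inv, Complex.norm_real, norm_norm]
      rw [inv_mul_cancel₀ (norm_ne_zero_iff.mpr hwj)]
  have hβz : ∀ j l, β j * z j l = w j l := by
    intro j l
    simp only [hβ_def, hz_def]
    by_cases hwj : w j = 0
    · simp only [dif_pos hwj, hwj]
      simp [hwj]
    · simp only [dif_neg hwj]
      have : ((‖w j‖ : ℂ)⁻¹ • w j) l = (‖w j‖ : ℂ)⁻¹ * w j l := rfl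
      rw [this, ← mul_assoc, mul_inv_cancel₀ (by
        simpa using norm_ne_zero_iff.mpr hwj : (‖w j‖ : ℂ) ≠ 0), one_mul]
  -- membership
  set s₀ : ℝ := ∑ j, ‖w j‖ with hs₀_def
  have hmem : s₀ ∈ {s : ℝ | ∃ (K : ℕ) (β : Fin K → ℂ)
      (z : Fin K → EuclideanSpace ℂ (Fin L)) (φ : Fin K → ℝ),
      (∀ i, ‖z i‖ = 1) ∧ (∀ i, φ i ∈ Set.Ico (0 : ℝ) 1) ∧
      X = ∑ i, β i • atomMat (M + 1) L (z i) (φ i) ∧ s = ∑ i, ‖β i‖} := by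
    refine ⟨M + 1 + L, β, z, φv, hznorm, hφv01, ?_, ?_⟩
    · ext l n
      rw [hXln l n]
      rw [Matrix.sum_apply]
      refine Finset.sum_congr rfl fun j _ => ?_
      rw [Matrix.smul_apply, atomMat, Matrix.of_apply, smul_eq_mul, ← mul_assoc, hβz]
    · rw [hs₀_def]
      refine Finset.sum_congr rfl fun j _ => ?_
      rw [hβ_def, Complex.norm_real, norm_norm]
  have hnorm_le : atomicNormN (M + 1) L X ≤ s₀ := csInf_le hbdd hmem
  -- Parseval
  have hpars : ∀ x : EuclideanSpace ℂ (Fin (M + 1) ⊕ Fin L),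
      Complex.re (⟪x, x⟫ : ℂ) = ∑ j, ‖(⟪f j, x⟫ : ℂ)‖ ^ 2 := by
    intro x
    have h1 : (⟪x, x⟫ : ℂ) = ∑ j, ((‖(⟪f j, x⟫ : ℂ)‖ : ℝ) : ℂ) ^ 2 := by
      have h0 : (⟪x, x⟫ : ℂ) = ⟪x, ∑ j, (⟪f j, x⟫ : ℂ) • f j⟫ :=
        congrArg (fun y => (⟪x, y⟫ : ℂ)) (hexp x)
      rw [h0, inner_sum]
      refine Finset.sum_congr rfl fun j _ => ?_
      rw [inner_smul_right, ← inner_conj_symm x (f j), Complex.mul_conj]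
      rw [Complex.normSq_eq_norm_sq]
      push_cast
      rfl
    rw [h1]
    rw [Complex.re_sum]
    refine Finset.sum_congr rfl fun j _ => ?_
    rw [← Complex.ofReal_pow, Complex.ofReal_re]
  -- trace identities
  have ha0 : ∑ j, ‖α j‖ ^ 2 = Complex.re (⟪a 0, a 0⟫ : ℂ) := by
    rw [hpars (a 0)]
  have hh2 : ∀ j, ‖h j‖ ^ 2 = ∑ l, ‖(⟪f j, g l⟫ : ℂ)‖ ^ 2 := by
    intro j
    rw [EuclideanSpace.norm_eq, Real.sq_sqrt (Finset.sum_nonneg fun l _ => sq_nonneg _)]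
    refine Finset.sum_congr rfl fun l _ => ?_
    have h2 : h j l = (starRingEnd ℂ) ((⟪f j, g l⟫ : ℂ)) := (inner_conj_symm (g l) (f j)).symm
    rw [h2, RCLike.norm_conj]
  have hgsum : ∑ j, ‖h j‖ ^ 2 = (Matrix.trace T).re := by
    rw [htrT]
    rw [Finset.sum_congr rfl fun j _ => hh2 j]
    rw [Finset.sum_comm]
    refine Finset.sum_congr rfl fun l _ => ?_
    rw [hpars (g l)]
  have htrace1 : (Matrix.trace (Toep (M + 1) u)).re = (M + 1) * Complex.re (⟪a 0, a 0⟫ : ℂ) := by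
    have hdiag : ∀ n : Fin (M + 1), Toep (M + 1) u n n = Toep (M + 1) u 0 0 := by
      intro n
      simp [Toep]
    rw [Matrix.trace, Complex.re_sum]
    rw [Finset.sum_congr rfl fun n _ => by rw [Matrix.diag_apply, hdiag n]]
    rw [Finset.sum_const, Finset.card_univ, Fintype.card_fin]
    rw [haa 0 0]
    simp [nsmul_eq_mul]
  -- final bound
  have hbound : s₀ ≤ (Matrix.trace (Toep (M + 1) u)).re / (2 * (M + 1))
      + (Matrix.trace T).re / 2 := by
    have h1 : s₀ ≤ (∑ j, ‖α j‖ ^ 2) / 2 + (∑ j, ‖h j‖ ^ 2) / 2 := by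
      rw [hs₀_def]
      have h2 : ∀ j, ‖w j‖ ≤ (‖α j‖ ^ 2 + ‖h j‖ ^ 2) / 2 := by
        intro j
        rw [hw_def]
        show ‖α j • h j‖ ≤ _
        rw [norm_smul]
        nlinarith [norm_nonneg (α j), norm_nonneg (h j), sq_nonneg (‖α j‖ - ‖h j‖)]
      calc ∑ j, ‖w j‖ ≤ ∑ j, (‖α j‖ ^ 2 + ‖h j‖ ^ 2) / 2 :=
            Finset.sum_le_sum fun j _ => h2 j
        _ = (∑ j, ‖α j‖ ^ 2) / 2 + (∑ j, ‖h j‖ ^ 2) / 2 := by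
            rw [← Finset.sum_div, Finset.sum_add_distrib, add_div]
    rw [ha0, hgsum] at h1
    refine h1.trans ?_
    have hM1 : ((M : ℝ) + 1) ≠ 0 := by positivity
    rw [htrace1]
    have : ((M : ℝ) + 1) * Complex.re (⟪a 0, a 0⟫ : ℂ) / (2 * ((M : ℕ) + 1 : ℝ))
        = Complex.re (⟪a 0, a 0⟫ : ℂ) / 2 := by
      field_simp
    push_cast
    rw [this]
  exact hnorm_le.trans (by push_cast; push_cast at hbound; linarith)
end
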